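/- Let μ = (μ_1,...,μ_n) with k = Σ μ_i, n = Σ i·μ_i, and let d > 2 be a divisor of n+2. Define a_μ(q) = (1/[n+1]_q) · [n+k choose k]_q · [k choose μ_1,...,μ_n]_q. If there is exactly one index j with μ_j ≡ 1 (mod d) and μ_i ≡ 0 (mod d) for all i ≠ j, then a_μ(ζ_d) = C((n+2)/d + (k-1)/d - 1, (k-1)/d) · multinomial((k-1)/d; ⌊μ_1/d⌋,...,⌊μ_n/d⌋), where ζ_d is a primitive d-th root of unity. -/

import Mathlib

open Polynomial in
/-- The Gaussian binomial coefficient `[n choose k]_q` as an integer polynomial in `q`,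
defined via the `q`-Pascal recursion
`[n+1 choose k+1]_q = [n choose k]_q + q^{k+1}·[n choose k+1]_q`;
it equals `[n]_q!/([k]_q!·[n-k]_q!)`. -/
noncomputable def qbinom : ℕ → ℕ → Polynomial ℤ
  | _, 0 => 1
  | 0, _ + 1 => 0
  | n + 1, k + 1 => qbinom n k + X ^ (k + 1) * qbinom n (k + 1)


open Polynomial in
/-- The `q`-integer `[m]_q = 1 + q + ⋯ + q^{m-1}` as an integer polynomial. -/
noncomputable def qnat (m : ℕ) : Polynomial ℤ := ∑ i ∈ Finset.range m, X ^ i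

/-- The `q`-multinomial coefficient `[k choose μ_1,…,μ_n]_q = [k]_q!/([μ_1]_q!⋯[μ_n]_q!)`
(where `k = Σ μ_i`), written as a product of Gaussian binomials
`∏_i [μ_1+⋯+μ_i choose μ_i]_q`. -/
noncomputable def qmultinom (n : ℕ) (μ : Fin n → ℕ) : Polynomial ℤ :=
  ∏ i : Fin n, qbinom (∑ j ∈ Finset.univ.filter (fun j : Fin n => j ≤ i), μ j) (μ i)


open Polynomial

lemma qbinom_zero (n : ℕ) : qbinom n 0 = 1 := by cases n <;> rfl

lemma qbinom_succ (n k : ℕ) :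
    qbinom (n + 1) (k + 1) = qbinom n k + X ^ (k + 1) * qbinom n (k + 1) := rfl

lemma qbinom_eq_zero : ∀ {n k : ℕ}, n < k → qbinom n k = 0 := by
  intro n
  induction n with
  | zero => intro k h; cases k with
    | zero => omega
    | succ k => rfl
  | succ n ih =>
    intro k h
    cases k with
    | zero => omega
    | succ k =>
      rw [qbinom_succ, ih (by omega), ih (by omega), mul_zero, add_zero]

lemma qbinom_self : ∀ n : ℕ, qbinom n n = 1 := by
  intro n
  induction n with
  | zero => rfl
  | succ n ih => rw [qbinom_succ, ih, qbinom_eq_zero (by omega), mul_zero, add_zero]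

lemma qnat_succ (m : ℕ) : qnat (m + 1) = qnat m + X ^ m := by
  rw [qnat, qnat, Finset.sum_range_succ]

lemma qnat_succ' (m : ℕ) : qnat (m + 1) = 1 + X * qnat m := by
  rw [qnat, qnat, Finset.sum_range_succ', Finset.mul_sum]
  simp [pow_succ, mul_comm]
  exact add_comm _ _

lemma qbinom_one : ∀ n : ℕ, qbinom n 1 = qnat n := by
  intro n
  induction n with
  | zero => simp [qnat]; rfl
  | succ n ih =>
    show qbinom n 0 + X ^ (0 + 1) * qbinom n (0 + 1) = _
    rw [qbinom_zero, qnat_succ']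
    norm_num [ih]

lemma one_sub_mul_qnat (m : ℕ) : (1 - X) * qnat m = 1 - X ^ m := by
  induction m with
  | zero => simp [qnat]
  | succ m ih => rw [qnat_succ, mul_add, ih]; ring

lemma qbinom_pascal' : ∀ n k : ℕ, k ≤ n →
    qbinom (n + 1) (k + 1) = X ^ (n - k) * qbinom n k + qbinom n (k + 1) := by
  intro n
  induction n with
  | zero =>
    intro k h
    interval_cases k
    simp [qbinom_self, qbinom_eq_zero]
  | succ n ih =>
    intro k h
    cases k with
    | zero =>
      rw [qbinom_succ, qbinom_zero, qbinom_one]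
      have h1 := qnat_succ (n + 1)
      have h2 := qnat_succ' (n + 1)
      simp only [Nat.sub_zero, zero_add, pow_one, mul_one]
      linear_combination h1 - h2
    | succ k =>
      rcases Nat.lt_or_ge k n with hk | hk
      · have e1 := ih k (by omega)
        have e2 := ih (k + 1) (by omega)
        have h1 : n + 1 - (k + 1) = n - k := by omega
        rw [h1]
        conv_lhs => rw [qbinom_succ (n + 1) (k + 1), e1, e2]
        conv_rhs => rw [qbinom_succ n k, qbinom_succ n (k + 1)]
        have h2 : (X : Polynomial ℤ) ^ (k + 1 + 1) * X ^ (n - (k + 1)) =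
            X ^ (n - k) * X ^ (k + 1) := by
          rw [← pow_add, ← pow_add]; congr 1; omega
        linear_combination qbinom n (k + 1) * h2
      · have hkn : k = n := by omega
        subst hkn
        rw [qbinom_self, qbinom_self, qbinom_eq_zero (by omega), Nat.sub_self, pow_zero]
        ring

lemma qnat_mul_qbinom (n k : ℕ) :
    qnat (k + 1) * qbinom (n + 1) (k + 1) = qnat (n + 1) * qbinom n k := by
  rcases Nat.lt_or_ge n k with h | h
  · rw [qbinom_eq_zero (by omega : n + 1 < k + 1), qbinom_eq_zero h, mul_zero, mul_zero]
  · have hc : (1 - X : Polynomial ℤ) ≠ 0 := by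
      intro hx
      have := congrArg (fun p => Polynomial.coeff p 1) hx
      simp [Polynomial.coeff_one] at this
    apply mul_left_cancel₀ hc
    rw [← mul_assoc, ← mul_assoc, one_sub_mul_qnat, one_sub_mul_qnat]
    have p1 := qbinom_succ n k
    have p2 := qbinom_pascal' n k h
    have h2 : (X : Polynomial ℤ) ^ (k + 1) * X ^ (n - k) = X ^ (n + 1) := by
      rw [← pow_add]; congr 1; omega
    calc (1 - X ^ (k + 1)) * qbinom (n + 1) (k + 1)
        = qbinom (n + 1) (k + 1) - X ^ (k + 1) * qbinom (n + 1) (k + 1) := by ring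
      _ = (qbinom n k + X ^ (k + 1) * qbinom n (k + 1))
          - X ^ (k + 1) * (X ^ (n - k) * qbinom n k + qbinom n (k + 1)) := by rw [← p1, ← p2]
      _ = (1 - X ^ (n + 1)) * qbinom n k := by linear_combination (-(qbinom n k)) * h2

section eval

variable {d : ℕ} {ζ : ℂ}

lemma aeval_one_sub_mul_qnat (ζ : ℂ) (m : ℕ) :
    (1 - ζ) * aeval ζ (qnat m) = 1 - ζ ^ m := by
  have := congrArg (aeval ζ) (one_sub_mul_qnat m)
  simpa using this

lemma aeval_qnat_eq (hζ1 : ζ ≠ 1) {m₁ m₂ : ℕ} (h : ζ ^ m₁ = ζ ^ m₂) :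
    aeval ζ (qnat m₁) = aeval ζ (qnat m₂) := by
  have hne : (1 - ζ) ≠ 0 := by
    intro hx; apply hζ1; linear_combination -hx
  apply mul_left_cancel₀ hne
  rw [aeval_one_sub_mul_qnat, aeval_one_sub_mul_qnat, h]

lemma aeval_qnat_ne_zero (hζ1 : ζ ≠ 1) {m : ℕ} (h : ζ ^ m ≠ 1) :
    aeval ζ (qnat m) ≠ 0 := by
  intro hx
  apply h
  have := aeval_one_sub_mul_qnat ζ m
  rw [hx, mul_zero] at this
  linear_combination this

lemma aeval_qnat_d (hd : 1 < d) (hζ : IsPrimitiveRoot ζ d) :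
    aeval ζ (qnat d) = 0 := by
  have hne : (1 - ζ) ≠ 0 := by
    intro hx; apply hζ.ne_one hd; linear_combination -hx
  apply mul_left_cancel₀ hne
  rw [aeval_one_sub_mul_qnat, hζ.pow_eq_one, mul_zero, sub_self]

lemma aeval_qbinom_d (hd : 1 < d) (hζ : IsPrimitiveRoot ζ d) {m : ℕ}
    (h0 : 0 < m) (h1 : m < d) : aeval ζ (qbinom d m) = 0 := by
  obtain ⟨k, rfl⟩ : ∃ k, m = k + 1 := ⟨m - 1, by omega⟩
  obtain ⟨n, rfl⟩ : ∃ n, d = n + 1 := ⟨d - 1, by omega⟩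
  have key := congrArg (aeval ζ) (qnat_mul_qbinom n k)
  rw [map_mul, map_mul, aeval_qnat_d hd hζ] at key
  have hne : aeval ζ (qnat (k + 1)) ≠ 0 := by
    apply aeval_qnat_ne_zero (hζ.ne_one hd)
    intro hx
    have hdvd := (hζ.pow_eq_one_iff_dvd (k + 1)).mp hx
    have := Nat.le_of_dvd (by omega) hdvd
    omega
  rw [zero_mul] at key
  exact (mul_eq_zero.mp key).resolve_left hne

lemma pow_mod_d (hζ : IsPrimitiveRoot ζ d) (m : ℕ) : ζ ^ m = ζ ^ (m % d) := by
  conv_lhs => rw [← Nat.div_add_mod m d]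
  rw [pow_add, pow_mul, hζ.pow_eq_one, one_pow, one_mul]

lemma succ_div_mod_of_eq {m : ℕ} (hd : 0 < d) (h : m % d + 1 = d) :
    (m + 1) / d = m / d + 1 ∧ (m + 1) % d = 0 := by
  have h1 : m + 1 = d * (m / d + 1) := by
    rw [Nat.mul_add, mul_one]
    have := Nat.div_add_mod m d; omega
  constructor
  · rw [h1, Nat.mul_div_cancel_left _ hd]
  · rw [h1]; exact Nat.mul_mod_right d _
lemma succ_div_mod_of_ne {m : ℕ} (hd : 0 < d) (h : m % d + 1 ≠ d) :
    (m + 1) / d = m / d ∧ (m + 1) % d = m % d + 1 := by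
  have hm : m % d < d := Nat.mod_lt _ hd
  have hlt : m % d + 1 < d := by omega
  have h1 : m + 1 = d * (m / d) + (m % d + 1) := by
    have := Nat.div_add_mod m d; omega
  constructor
  · rw [h1, Nat.mul_add_div hd, Nat.div_eq_of_lt hlt, add_zero]
  · rw [h1, Nat.mul_add_mod, Nat.mod_eq_of_lt hlt]

lemma qlucas (hd : 1 < d) (hζ : IsPrimitiveRoot ζ d) :
    ∀ n k : ℕ, aeval ζ (qbinom n k) =
      (Nat.choose (n / d) (k / d) : ℂ) * aeval ζ (qbinom (n % d) (k % d)) := by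
  have hd0 : 0 < d := by omega
  intro n
  induction n with
  | zero =>
    intro k
    cases k with
    | zero => simp [qbinom_zero]
    | succ k =>
      rw [qbinom_eq_zero (by omega), Nat.zero_mod, Nat.zero_div]
      rcases Nat.eq_zero_or_pos ((k + 1) / d) with h | h
      · have hm : (k + 1) % d = k + 1 := by
          have hdm := Nat.div_add_mod (k + 1) d
          rw [h, Nat.mul_zero] at hdm
          omega
        rw [hm, qbinom_eq_zero (by omega)]
        simp
      · rw [Nat.choose_eq_zero_of_lt (by omega)]
        simp
  | succ n ih =>
    intro k
    cases k with
    | zero => simp [qbinom_zero, Nat.zero_div, Nat.zero_mod]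
    | succ k =>
      have hrn : n % d < d := Nat.mod_lt _ hd0
      have hrk : k % d < d := Nat.mod_lt _ hd0
      rw [qbinom_succ, map_add, map_mul, map_pow, aeval_X, ih k, ih (k + 1),
        pow_mod_d hζ (k + 1)]
      by_cases h1 : n % d + 1 = d
      · obtain ⟨hdiv1, hmod1⟩ := succ_div_mod_of_eq hd0 h1
        by_cases h2 : k % d + 1 = d
        · obtain ⟨hdiv2, hmod2⟩ := succ_div_mod_of_eq hd0 h2
          rw [hdiv1, hmod1, hdiv2, hmod2, show n % d = k % d by omega,
            qbinom_self, qbinom_zero, qbinom_zero, pow_zero]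
          push_cast [Nat.choose_succ_succ]
          simp
          try ring
        · obtain ⟨hdiv2, hmod2⟩ := succ_div_mod_of_ne hd0 h2
          have hdm : d - 1 + 1 = d := by omega
          have e0 : aeval ζ (qbinom d (k % d + 1)) = 0 :=
            aeval_qbinom_d hd hζ (by omega) (by omega)
          rw [← hdm, qbinom_succ, map_add, map_mul, map_pow, aeval_X, hdm] at e0
          rw [hdiv1, hmod1, hdiv2, hmod2, show n % d = d - 1 by omega,
            qbinom_eq_zero (show (0:ℕ) < k % d + 1 by omega)]
          rw [map_zero, mul_zero]
          linear_combination (Nat.choose (n / d) (k / d) : ℂ) * e0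
      · obtain ⟨hdiv1, hmod1⟩ := succ_div_mod_of_ne hd0 h1
        by_cases h2 : k % d + 1 = d
        · obtain ⟨hdiv2, hmod2⟩ := succ_div_mod_of_eq hd0 h2
          rw [hdiv1, hmod1, hdiv2, hmod2, pow_zero,
            qbinom_eq_zero (show n % d < k % d by omega), qbinom_zero, qbinom_zero]
          simp
        · obtain ⟨hdiv2, hmod2⟩ := succ_div_mod_of_ne hd0 h2
          rw [hdiv1, hmod1, hdiv2, hmod2, qbinom_succ, map_add, map_mul, map_pow, aeval_X]
          ring

end eval

lemma multinomial_eq_prod_choose {n : ℕ} (f : Fin n → ℕ) (s : Finset (Fin n)) :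
    (Nat.multinomial s f : ℕ) =
      ∏ i ∈ s, Nat.choose (∑ l ∈ s.filter (fun l => l ≤ i), f l) (f i) := by
  induction s using Finset.induction_on_max with
  | empty => simp
  | insert a s ha ih =>
    have ha' : a ∉ s := fun h => lt_irrefl a (ha a h)
    rw [Nat.multinomial_insert ha', Finset.prod_insert ha', ih]
    have hfa : Finset.filter (fun l => l ≤ a) (insert a s) = insert a s := by
      apply Finset.filter_true_of_mem
      intro x hx
      rcases Finset.mem_insert.mp hx with rfl | hx
      · exact le_refl x
      · exact le_of_lt (ha x hx)
    congr 1
    · rw [hfa, Finset.sum_insert ha']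
    · apply Finset.prod_congr rfl
      intro i hi
      congr 2
      rw [Finset.filter_insert, if_neg (not_le_of_gt (ha i hi))]

/-- for `d > 2` dividing `n+2`, if exactly one index `j` has
`μ_j ≡ 1 (mod d)` and `μ_i ≡ 0 (mod d)` for `i ≠ j`, then the polynomial
`a_μ(q)` (characterized by `[n+1]_q·a_μ(q) = [n+k choose k]_q·[k choose μ]_q`)
evaluates at a primitive `d`-th root of unity `ζ_d` to
`C((n+2)/d + (k-1)/d - 1, (k-1)/d)·multinomial((k-1)/d; ⌊μ_1/d⌋,…,⌊μ_n/d⌋)`. -/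
theorem stmt3 (n k d : ℕ) (μ : Fin n → ℕ)
    (hk : k = ∑ i, μ i) (hn : n = ∑ i, (i.val + 1) * μ i)
    (hd : d ∣ n + 2) (hd2 : 2 < d)
    (j : Fin n) (hj : μ j % d = 1) (hoth : ∀ i : Fin n, i ≠ j → μ i % d = 0)
    (ζ : ℂ) (hζ : IsPrimitiveRoot ζ d)
    (P : Polynomial ℤ) (hP : qnat (n + 1) * P = qbinom (n + k) k * qmultinom n μ) :
    Polynomial.aeval ζ P =
      ((Nat.choose ((n + 2) / d + (k - 1) / d - 1) ((k - 1) / d) *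
        Nat.multinomial Finset.univ (fun i => μ i / d) : ℕ) : ℂ) := by
  classical
  have hd1 : 1 < d := by omega
  have hd0 : 0 < d := by omega
  have hζ1 : ζ ≠ 1 := hζ.ne_one hd1
  set ν : Fin n → ℕ := fun i => μ i / d with hν
  have hμi : ∀ i, μ i = d * ν i + (if i = j then 1 else 0) := by
    intro i
    have hdm := Nat.div_add_mod (μ i) d
    have hνi : ν i = μ i / d := rfl
    by_cases h : i = j
    · subst h; rw [hj] at hdm; rw [if_pos rfl, hνi]; omega
    · rw [hoth i h] at hdm; rw [if_neg h, hνi]; omega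
  set b := ∑ i, ν i with hb
  have hksum : k = d * b + 1 := by
    rw [hk, Finset.sum_congr rfl (fun i _ => hμi i), Finset.sum_add_distrib,
      ← Finset.mul_sum, Finset.sum_ite_eq' Finset.univ j (fun _ => 1)]
    simp [hb]
  have hkd : k / d = b := by
    rw [hksum, Nat.mul_add_div hd0, Nat.div_eq_of_lt hd1, add_zero]
  have hkmod : k % d = 1 := by
    rw [hksum, Nat.mul_add_mod, Nat.mod_eq_of_lt hd1]
  have hk1d : (k - 1) / d = b := by
    rw [hksum]
    simp [Nat.mul_div_cancel_left _ hd0]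
  obtain ⟨a, hna⟩ := hd
  obtain ⟨a', rfl⟩ : ∃ a', a = a' + 1 := by
    refine ⟨a - 1, ?_⟩
    rcases Nat.eq_zero_or_pos a with rfl | h
    · simp at hna
    · omega
  have hmuladd : d * (a' + 1) = d * a' + d := by ring
  have hnval : n = d * a' + (d - 2) := by omega
  have hmulab : d * (a' + b) = d * a' + d * b := by ring
  have hnk : n + k = d * (a' + b) + (d - 1) := by omega
  have hnk_div : (n + k) / d = a' + b := by
    rw [hnk, Nat.mul_add_div hd0, Nat.div_eq_of_lt (by omega), add_zero]
  have hnk_mod : (n + k) % d = d - 1 := by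
    rw [hnk, Nat.mul_add_mod, Nat.mod_eq_of_lt (by omega)]
  have hn1 : n + 1 = d * a' + (d - 1) := by omega
  have hn1_mod : (n + 1) % d = d - 1 := by
    rw [hn1, Nat.mul_add_mod, Nat.mod_eq_of_lt (by omega)]
  -- partial sums
  have hS : ∀ i : Fin n, (∑ l ∈ Finset.univ.filter (fun l => l ≤ i), μ l) =
      d * (∑ l ∈ Finset.univ.filter (fun l => l ≤ i), ν l) + (if j ≤ i then 1 else 0) := by
    intro i
    rw [Finset.sum_congr rfl (fun l _ => hμi l), Finset.sum_add_distrib, ← Finset.mul_sum,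
      Finset.sum_ite_eq' (Finset.univ.filter (fun l => l ≤ i)) j (fun _ => 1)]
    simp
  -- q-multinomial evaluation
  have hmul : aeval ζ (qmultinom n μ) =
      ∏ i : Fin n,
        (Nat.choose (∑ l ∈ Finset.univ.filter (fun l => l ≤ i), ν l) (ν i) : ℂ) := by
    rw [qmultinom, map_prod]
    apply Finset.prod_congr rfl
    intro i _
    rw [qlucas hd1 hζ]
    have hSi := hS i
    have hfloor : (∑ l ∈ Finset.univ.filter (fun l => l ≤ i), μ l) / d =
        ∑ l ∈ Finset.univ.filter (fun l => l ≤ i), ν l := by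
      rw [hSi, Nat.mul_add_div hd0, Nat.div_eq_of_lt (by split_ifs <;> omega), add_zero]
    have hmod : (∑ l ∈ Finset.univ.filter (fun l => l ≤ i), μ l) % d =
        if j ≤ i then 1 else 0 := by
      rw [hSi, Nat.mul_add_mod, Nat.mod_eq_of_lt (by split_ifs <;> omega)]
    rw [hfloor, hmod]
    have hμd : μ i / d = ν i := rfl
    rw [hμd]
    by_cases hij : i = j
    · subst hij
      rw [hj, if_pos (le_refl i), qbinom_self 1, map_one, mul_one]
    · rw [hoth i hij, qbinom_zero, map_one, mul_one]
  -- binomial evaluation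
  have hbin : aeval ζ (qbinom (n + k) k) =
      (Nat.choose (a' + b) b : ℂ) * aeval ζ (qnat (d - 1)) := by
    rw [qlucas hd1 hζ, hnk_div, hnk_mod, hkd, hkmod, qbinom_one]
  have hqnat : aeval ζ (qnat (n + 1)) = aeval ζ (qnat (d - 1)) := by
    apply aeval_qnat_eq hζ1
    rw [pow_mod_d hζ (n + 1), hn1_mod]
  have hv : aeval ζ (qnat (d - 1)) ≠ 0 := by
    apply aeval_qnat_ne_zero hζ1
    intro hx
    have hdvd := (hζ.pow_eq_one_iff_dvd (d - 1)).mp hx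
    have := Nat.le_of_dvd (by omega) hdvd
    omega
  have key := congrArg (aeval ζ) hP
  rw [map_mul, map_mul, hqnat, hbin, hmul] at key
  have main : aeval ζ P = (Nat.choose (a' + b) b : ℂ) *
      ∏ i : Fin n,
        (Nat.choose (∑ l ∈ Finset.univ.filter (fun l => l ≤ i), ν l) (ν i) : ℂ) := by
    apply mul_left_cancel₀ hv
    rw [key]; ring
  rw [main]
  have harith : (n + 2) / d + (k - 1) / d - 1 = a' + b := by
    have h2 : (n + 2) / d = a' + 1 := by
      rw [hna, Nat.mul_div_cancel_left _ hd0]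
    rw [h2, hk1d]
    omega
  rw [harith, hk1d]
  push_cast [multinomial_eq_prod_choose]
  ring
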